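/- For every k ∈ {0,…,n−1} and every R > 0 there exists a constant C > 0 such that for all ε ∈ (0,1], all r ∈ [−R,R], all v ∈ ℝ^m with |v| ≤ 1, and all indices j with d_k < j ≤ d, one has |⟨e_j, exp(εrA)Bv⟩ − (ε^k r^k / k!)⟨e_j, A^k B v⟩| ≤ C ε^{k+1}. -/

import Mathlib

open Matrix MeasureTheory

noncomputable section

/-- The span of the vectors `A^l B v` for `l < N`, `v ∈ ℝ^m`; for `N = k` this is `E_k`. -/
def kalmanSpan (d m : ℕ) (A : Matrix (Fin d) (Fin d) ℝ) (B : Matrix (Fin d) (Fin m) ℝ)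
    (N : ℕ) : Submodule ℝ (Fin d → ℝ) :=
  Submodule.span ℝ {x | ∃ l, l < N ∧ ∃ v : Fin m → ℝ, x = (A ^ l * B).mulVec v}

/-- `d_k = dim E_k` (with `d_0 = 0`). -/
def dk {d m : ℕ} (A : Matrix (Fin d) (Fin d) ℝ) (B : Matrix (Fin d) (Fin m) ℝ) (k : ℕ) : ℕ :=
  Module.finrank ℝ (kalmanSpan d m A B k)

/-- For every `k ∈ {0,…,n−1}` and every `R > 0` there is `C > 0` such that for all
`ε ∈ (0,1]`, `r ∈ [−R,R]`, `v ∈ ℝ^m` with `|v| ≤ 1` and indices `j` with `d_k < j ≤ d`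
(in one-based labelling, i.e. `d_k ≤ j` zero-based),
`|⟨e_j, exp(εrA)Bv⟩ − (ε^k r^k/k!) ⟨e_j, A^k B v⟩| ≤ C ε^{k+1}`. -/
theorem exp_entry_expansion (d m : ℕ) (hd : 0 < d) (hm : 0 < m)
    (A : Matrix (Fin d) (Fin d) ℝ) (B : Matrix (Fin d) (Fin m) ℝ)
    (n : ℕ) (hK : kalmanSpan d m A B n = ⊤)
    (hmin : ∀ N : ℕ, kalmanSpan d m A B N = ⊤ → n ≤ N)
    (e : Fin d → Fin d → ℝ)
    (h_on : ∀ i j : Fin d, e i ⬝ᵥ e j = if i = j then (1:ℝ) else 0)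
    (h_adapt : ∀ k : ℕ, 1 ≤ k → k ≤ n →
      kalmanSpan d m A B k =
        Submodule.span ℝ {x | ∃ j : Fin d, (j : ℕ) < dk A B k ∧ x = e j}) :
    ∀ k : ℕ, k < n → ∀ R : ℝ, 0 < R → ∃ C : ℝ, 0 < C ∧
      ∀ ε : ℝ, 0 < ε → ε ≤ 1 → ∀ r : ℝ, |r| ≤ R →
        ∀ v : Fin m → ℝ, Real.sqrt (∑ i, v i ^ 2) ≤ 1 →
          ∀ j : Fin d, dk A B k ≤ (j : ℕ) →
            |e j ⬝ᵥ (NormedSpace.exp ((ε * r) • A) * B).mulVec v -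
                ε ^ k * r ^ k / (Nat.factorial k) *
                  (e j ⬝ᵥ (A ^ k * B).mulVec v)| ≤ C * ε ^ (k + 1) := by
  letI : SeminormedRing (Matrix (Fin d) (Fin d) ℝ) := Matrix.linftyOpSemiNormedRing
  letI : NormedRing (Matrix (Fin d) (Fin d) ℝ) := Matrix.linftyOpNormedRing
  letI : NormedAlgebra ℝ (Matrix (Fin d) (Fin d) ℝ) := Matrix.linftyOpNormedAlgebra
  letI : NormedAddCommGroup (Matrix (Fin d) (Fin m) ℝ) := Matrix.linftyOpNormedAddCommGroup
  intro k hk R hR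
  set q : ℝ := R * ‖A‖ with hq
  have hq0 : (0:ℝ) ≤ q := mul_nonneg hR.le (norm_nonneg _)
  refine ⟨(d * ‖B‖ + 1) * (q + 1) ^ (k + 1) * Real.exp q, by positivity, ?_⟩
  intro ε hε hε1 r hr v hv j hj
  -- orthogonality to lower levels
  have horto : ∀ l, l < k → e j ⬝ᵥ (A ^ l * B).mulVec v = 0 := by
    intro l hl
    have hk1 : 1 ≤ k := by omega
    have hx : (A ^ l * B).mulVec v ∈ kalmanSpan d m A B k :=
      Submodule.subset_span ⟨l, hl, v, rfl⟩
    rw [h_adapt k hk1 hk.le] at hx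
    refine Submodule.span_induction (p := fun x _ => e j ⬝ᵥ x = 0) ?_ ?_ ?_ ?_ hx
    · rintro x ⟨i, hi, rfl⟩
      have hji : j ≠ i := by
        intro h; rw [h] at hj; omega
      rw [h_on j i, if_neg hji]
    · simp
    · intro x y hx' hy' ihx ihy; simp [dotProduct_add, ihx, ihy]
    · intro a x hx' ihx; simp [dotProduct_smul, ihx]
  -- vector norm bound
  have hv' : ‖v‖ ≤ 1 := by
    rw [pi_norm_le_iff_of_nonneg zero_le_one]
    intro i
    have h1 : v i ^ 2 ≤ ∑ i, v i ^ 2 :=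
      Finset.single_le_sum (f := fun i => v i ^ 2) (fun i _ => sq_nonneg _) (Finset.mem_univ i)
    calc ‖v i‖ = Real.sqrt (v i ^ 2) := by rw [Real.sqrt_sq_eq_abs, Real.norm_eq_abs]
    _ ≤ Real.sqrt (∑ i, v i ^ 2) := Real.sqrt_le_sqrt h1
    _ ≤ 1 := hv
  -- entries of e j
  have he1 : ∀ i, |e j i| ≤ 1 := by
    intro i
    have h1 : e j ⬝ᵥ e j = 1 := by rw [h_on j j, if_pos rfl]
    have h2 : e j i * e j i ≤ 1 := by
      rw [← h1]
      exact Finset.single_le_sum (f := fun i => e j i * e j i)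
        (fun i _ => mul_self_nonneg _) (Finset.mem_univ i)
    exact abs_le_one_iff_mul_self_le_one.mpr h2
  have hdot : ∀ w : Fin d → ℝ, |e j ⬝ᵥ w| ≤ d * ‖w‖ := by
    intro w
    calc |∑ i, e j i * w i| ≤ ∑ i, |e j i * w i| := Finset.abs_sum_le_sum_abs _ _
    _ ≤ ∑ _i : Fin d, 1 * ‖w‖ := by
        refine Finset.sum_le_sum fun i _ => ?_
        rw [abs_mul]
        exact mul_le_mul (he1 i) (norm_le_pi_norm w i) (abs_nonneg _) zero_le_one
    _ = d * ‖w‖ := by simp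
  -- power bound
  have hpow : ∀ (M : Matrix (Fin d) (Fin d) ℝ) (l : ℕ), ‖M ^ l * B‖ ≤ ‖M‖ ^ l * ‖B‖ := by
    intro M l
    induction l with
    | zero => simp
    | succ l ih =>
      calc ‖M ^ (l + 1) * B‖ = ‖M * (M ^ l * B)‖ := by rw [pow_succ']; rw [Matrix.mul_assoc]
      _ ≤ ‖M‖ * ‖M ^ l * B‖ := Matrix.linfty_opNorm_mul _ _
      _ ≤ ‖M‖ * (‖M‖ ^ l * ‖B‖) :=
          mul_le_mul_of_nonneg_left ih (norm_nonneg _)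
      _ = ‖M‖ ^ (l + 1) * ‖B‖ := by ring
  -- the scalar series
  set Φ : ℕ → ℝ := fun l => (ε * r) ^ l / (Nat.factorial l) *
      (e j ⬝ᵥ (A ^ l * B).mulVec v) with hΦdef
  have hterm : ∀ l, |e j ⬝ᵥ (A ^ l * B).mulVec v| ≤ d * (‖A‖ ^ l * ‖B‖) := by
    intro l
    calc |e j ⬝ᵥ (A ^ l * B).mulVec v| ≤ d * ‖(A ^ l * B).mulVec v‖ := hdot _
    _ ≤ d * (‖A ^ l * B‖ * ‖v‖) := by
        refine mul_le_mul_of_nonneg_left (Matrix.linfty_opNorm_mulVec _ _) (by positivity)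
    _ ≤ d * (‖A ^ l * B‖ * 1) := by
        refine mul_le_mul_of_nonneg_left (mul_le_mul_of_nonneg_left hv' (norm_nonneg _))
          (by positivity)
    _ = d * ‖A ^ l * B‖ := by ring
    _ ≤ d * (‖A‖ ^ l * ‖B‖) :=
        mul_le_mul_of_nonneg_left (hpow A l) (by positivity)
  have hεr : |ε * r| ≤ ε * R := by
    rw [abs_mul, abs_of_pos hε]
    exact mul_le_mul_of_nonneg_left hr hε.le
  have hεq : (0:ℝ) ≤ ε * q := by positivity
  have hΦb : ∀ l, |Φ l| ≤ d * ‖B‖ * ((ε * q) ^ l / (Nat.factorial l)) := by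
    intro l
    simp only [hΦdef, abs_mul, abs_div]
    have h1 : |(ε * r) ^ l| ≤ (ε * R) ^ l := by
      rw [abs_pow]
      exact pow_le_pow_left₀ (abs_nonneg _) hεr l
    have hfac : (0:ℝ) < Nat.factorial l := by positivity
    rw [abs_of_pos hfac]
    calc |(ε * r) ^ l| / (Nat.factorial l) * |e j ⬝ᵥ (A ^ l * B).mulVec v|
        ≤ (ε * R) ^ l / (Nat.factorial l) * (d * (‖A‖ ^ l * ‖B‖)) := by
          refine mul_le_mul (by gcongr) (hterm l) (abs_nonneg _) (by positivity)
    _ = d * ‖B‖ * ((ε * R * ‖A‖) ^ l / (Nat.factorial l)) := by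
        rw [mul_pow]; ring
    _ = d * ‖B‖ * ((ε * q) ^ l / (Nat.factorial l)) := by
        rw [hq]; ring_nf
  have hsumb : Summable (fun l => d * ‖B‖ * ((ε * q) ^ l / (Nat.factorial l))) :=
    (Real.summable_pow_div_factorial (ε * q)).mul_left _
  have hΦsum : Summable Φ :=
    Summable.of_norm_bounded hsumb (fun l => by
      rw [Real.norm_eq_abs]; exact hΦb l)
  -- expansion of the exponential entry
  have hexp : e j ⬝ᵥ (NormedSpace.exp ((ε * r) • A) * B).mulVec v = ∑' l, Φ l := by
    let L : Matrix (Fin d) (Fin d) ℝ →ₗ[ℝ] ℝ :=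
      { toFun := fun M => e j ⬝ᵥ (M * B).mulVec v
        map_add' := fun M N => by
          simp [Matrix.add_mul, Matrix.add_mulVec, dotProduct_add]
        map_smul' := fun c M => by
          simp [Matrix.smul_mul, Matrix.smul_mulVec, dotProduct_smul] }
    have hs : Summable (fun l : ℕ => ((Nat.factorial l : ℝ))⁻¹ • ((ε * r) • A) ^ l) :=
      NormedSpace.expSeries_summable' ((ε * r) • A)
    calc e j ⬝ᵥ (NormedSpace.exp ((ε * r) • A) * B).mulVec v
        = (LinearMap.toContinuousLinearMap L) (NormedSpace.exp ((ε * r) • A)) := rfl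
    _ = (LinearMap.toContinuousLinearMap L)
          (∑' l : ℕ, ((Nat.factorial l : ℝ))⁻¹ • ((ε * r) • A) ^ l) := by
        rw [NormedSpace.exp_eq_tsum ℝ]
    _ = ∑' l : ℕ, (LinearMap.toContinuousLinearMap L)
          (((Nat.factorial l : ℝ))⁻¹ • ((ε * r) • A) ^ l) := by
        exact (LinearMap.toContinuousLinearMap L).map_tsum hs
    _ = ∑' l, Φ l := by
        refine tsum_congr fun l => ?_
        simp only [hΦdef]
        simp only [_root_.map_smul, smul_eq_mul]
        have : (LinearMap.toContinuousLinearMap L) (((ε * r) • A) ^ l) =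
            (ε * r) ^ l * (e j ⬝ᵥ (A ^ l * B).mulVec v) := by
          rw [smul_pow]
          show e j ⬝ᵥ ((((ε * r) ^ l • A ^ l) * B)).mulVec v = _
          rw [Matrix.smul_mul, Matrix.smul_mulVec, dotProduct_smul, smul_eq_mul]
        rw [this]; ring
  -- partial sum
  have hΦk : Φ k = ε ^ k * r ^ k / (Nat.factorial k) * (e j ⬝ᵥ (A ^ k * B).mulVec v) := by
    simp only [hΦdef]; rw [mul_pow]
  have hpartial : ∑ l ∈ Finset.range (k + 1), Φ l = Φ k := by
    rw [Finset.sum_range_succ]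
    rw [Finset.sum_eq_zero, zero_add]
    intro l hl
    simp only [hΦdef]
    rw [horto l (Finset.mem_range.mp hl), mul_zero]
  have hadd := Summable.sum_add_tsum_nat_add (f := Φ) (k + 1) hΦsum
  have htail : (∑' l, Φ l) - Φ k = ∑' l, Φ (l + (k + 1)) := by
    rw [← hadd, hpartial]; ring
  -- tail bound
  have htb : ∀ l : ℕ, |Φ (l + (k + 1))| ≤
      d * ‖B‖ * (q + 1) ^ (k + 1) * ε ^ (k + 1) * (q ^ l / (Nat.factorial l)) := by
    intro l
    calc |Φ (l + (k + 1))| ≤ d * ‖B‖ * ((ε * q) ^ (l + (k + 1)) / (Nat.factorial (l + (k + 1)))) :=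
        hΦb _
    _ ≤ d * ‖B‖ * ((ε * q) ^ (l + (k + 1)) / (Nat.factorial l)) := by
        have h1 : (Nat.factorial l : ℝ) ≤ (Nat.factorial (l + (k + 1)) : ℝ) := by
          exact_mod_cast Nat.factorial_le (by omega)
        gcongr
        all_goals first
          | positivity
          | exact_mod_cast Nat.factorial_pos l
          | exact h1
    _ = d * ‖B‖ * (ε ^ (l + (k + 1)) * (q ^ (k + 1) * (q ^ l / (Nat.factorial l)))) := by
        rw [mul_pow, pow_add]; ring
    _ ≤ d * ‖B‖ * (ε ^ (k + 1) * ((q + 1) ^ (k + 1) * (q ^ l / (Nat.factorial l)))) := by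
        have h2 : ε ^ (l + (k + 1)) ≤ ε ^ (k + 1) :=
          pow_le_pow_of_le_one hε.le hε1 (by omega)
        have h3 : q ^ (k + 1) ≤ (q + 1) ^ (k + 1) := by gcongr; linarith
        have h4 : (0:ℝ) ≤ q ^ l / (Nat.factorial l) := by positivity
        refine mul_le_mul_of_nonneg_left ?_ (by positivity)
        refine mul_le_mul h2 (mul_le_mul_of_nonneg_right h3 h4) (by positivity) (by positivity)
    _ = d * ‖B‖ * (q + 1) ^ (k + 1) * ε ^ (k + 1) * (q ^ l / (Nat.factorial l)) := by ring
  have hsumq : Summable (fun l : ℕ => q ^ l / (Nat.factorial l)) :=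
    Real.summable_pow_div_factorial q
  have hsumb2 : Summable (fun l : ℕ =>
      d * ‖B‖ * (q + 1) ^ (k + 1) * ε ^ (k + 1) * (q ^ l / (Nat.factorial l))) :=
    hsumq.mul_left _
  have htailsum : Summable (fun l => Φ (l + (k + 1))) :=
    (summable_nat_add_iff (k + 1)).mpr hΦsum
  have hqexp : (∑' l : ℕ, q ^ l / (Nat.factorial l)) = Real.exp q := by
    rw [Real.exp_eq_exp_ℝ, NormedSpace.exp_eq_tsum_div]
  have hfinal : |∑' l, Φ (l + (k + 1))| ≤
      d * ‖B‖ * (q + 1) ^ (k + 1) * Real.exp q * ε ^ (k + 1) := by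
    have hns : Summable (fun l => ‖Φ (l + (k + 1))‖) := by
      refine Summable.of_nonneg_of_le (fun l => norm_nonneg _) (fun l => ?_) hsumb2
      rw [Real.norm_eq_abs]; exact htb l
    calc |∑' l, Φ (l + (k + 1))| ≤ (∑' l, |Φ (l + (k + 1))|) := by
          simpa only [Real.norm_eq_abs] using norm_tsum_le_tsum_norm hns
    _ ≤ (∑' l : ℕ, d * ‖B‖ * (q + 1) ^ (k + 1) * ε ^ (k + 1) * (q ^ l / (Nat.factorial l))) := by
        refine Summable.tsum_le_tsum (fun l => htb l) ?_ hsumb2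
        refine Summable.of_nonneg_of_le (fun l => abs_nonneg _) (fun l => htb l) hsumb2
    _ = d * ‖B‖ * (q + 1) ^ (k + 1) * ε ^ (k + 1) * ∑' l : ℕ, q ^ l / (Nat.factorial l) := by
        rw [tsum_mul_left]
    _ = d * ‖B‖ * (q + 1) ^ (k + 1) * Real.exp q * ε ^ (k + 1) := by
        rw [hqexp]; ring
  rw [hexp, ← hΦk]
  rw [htail]
  calc |∑' l, Φ (l + (k + 1))| ≤ d * ‖B‖ * (q + 1) ^ (k + 1) * Real.exp q * ε ^ (k + 1) := hfinal
  _ ≤ (d * ‖B‖ + 1) * (q + 1) ^ (k + 1) * Real.exp q * ε ^ (k + 1) := by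
      have h5 : (d : ℝ) * ‖B‖ ≤ d * ‖B‖ + 1 := by linarith
      gcongr
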